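/- arXiv:2212.12921 — 4 statements merged into one kernel-verified Lean document; each statement's English description precedes it below -/
import Mathlib

section
/- The Fenchel conjugate of gs_k equals the k-weighted-group hard-thresholding function: gs_k*(θ̃) = (1/2)·Σ_{j=1}^k (1/d_{⟨j⟩})·‖θ̃_{⟨s_j⟩}‖₂², where ⟨s_1⟩,…,⟨s_m⟩ is an ordering of the groups such that the values (1/d_j)·‖θ̃_{s_j}‖₂² are in nonincreasing order, i.e., the conjugate is half the sum of the k largest values of (1/d_j)·‖θ̃_{s_j}‖₂² over j ∈ {1,…,m}. -/
open Finset

noncomputable section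
open scoped Classical BigOperators

/-- Keep only the entries of `θ` in the index set `s`, zero out the rest. -/
def groupProj {n : ℕ} (s : Finset (Fin n)) (θ : Fin n → ℝ) : Fin n → ℝ :=
  fun i => if i ∈ s then θ i else 0

/-- Number of groups of `θ` (w.r.t. the groups `s`) that are nonzero. -/
def nnzGroups {n m : ℕ} (s : Fin m → Finset (Fin n)) (θ : Fin n → ℝ) : ℕ :=
  (Finset.univ.filter fun j => groupProj (s j) θ ≠ 0).card

/-- The indicator-augmented weighted group sparse function `gs_k`. -/
def gsk {n m : ℕ} (s : Fin m → Finset (Fin n)) (d : Fin m → ℝ) (k : ℕ)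
    (θ : Fin n → ℝ) : EReal :=
  if nnzGroups s θ ≤ k then
    (((1 : ℝ) / 2) * ∑ j, d j * ∑ i ∈ s j, (θ i) ^ 2 : ℝ) else ⊤

/-- Fenchel conjugate of an extended-real-valued function on `ℝⁿ`. -/
def fconj {n : ℕ} (f : (Fin n → ℝ) → EReal) (y : Fin n → ℝ) : EReal :=
  ⨆ θ : Fin n → ℝ, ((∑ i, y i * θ i : ℝ) : EReal) - f θ

/-- Perspective of the squared Euclidean norm. -/
def phi {n : ℕ} (v : Fin n → ℝ) (t : ℝ) : EReal :=
  if 0 < t then ((∑ i, (v i) ^ 2) / t : ℝ)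
  else if v = 0 ∧ t = 0 then (0 : EReal) else ⊤

/-- `ℓ₀` "norm": number of nonzero coordinates. -/
def l0norm {n : ℕ} (t : Fin n → ℝ) : ℕ :=
  (Finset.univ.filter fun i => t i ≠ 0).card

/-- The (unstructured) sparse function `s_k`. -/
def sparseFun {m : ℕ} (k : ℕ) (x : Fin m → ℝ) : EReal :=
  if l0norm x ≤ k then (((1 : ℝ) / 2) * ∑ i, (x i) ^ 2 : ℝ) else ⊤

/-- The constraint set `B_k`. -/
def Bk (m k : ℕ) : Set (Fin m → ℝ) :=
  {u | (∀ j, 0 ≤ u j ∧ u j ≤ 1) ∧ (∑ j, u j) ≤ (k : ℝ)}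


lemma strictMonoNat_le {c : ℕ} (f : Fin c → ℕ) (hf : StrictMono f) :
    ∀ i : Fin c, (i : ℕ) ≤ f i := by
  rintro ⟨i, hi⟩
  induction i with
  | zero => exact Nat.zero_le _
  | succ j ih =>
    have h1 : f ⟨j, Nat.lt_of_succ_lt hi⟩ < f ⟨j + 1, hi⟩ := hf (by simp [Fin.lt_def])
    have h2 := ih (Nat.lt_of_succ_lt hi)
    simp only [Fin.val_mk] at h1 h2 ⊢
    omega

lemma topk_le {m k : ℕ} (hkm : k ≤ m) (c : Fin m → ℝ) (hc0 : ∀ j, 0 ≤ c j)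
    (hc : Antitone c) (S : Finset (Fin m)) (hS : S.card ≤ k) :
    ∑ j ∈ S, c j ≤ ∑ j ∈ Finset.univ.filter (fun j : Fin m => (j : ℕ) < k), c j := by
  classical
  set cs := S.card with hcs
  let e : Fin cs ↪o Fin m := S.orderEmbOfFin rfl
  have himg : Finset.image (fun i => e i) Finset.univ = S := by
    ext x
    simp only [Finset.mem_image, Finset.mem_univ, true_and]
    constructor
    · rintro ⟨i, rfl⟩; exact S.orderEmbOfFin_mem rfl i
    · intro hx
      have : x ∈ Set.range (S.orderEmbOfFin rfl) := by
        rw [Finset.range_orderEmbOfFin]; exact hx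
      obtain ⟨i, hi⟩ := this; exact ⟨i, hi⟩
  have h1 : ∑ j ∈ S, c j = ∑ i : Fin cs, c (e i) := by
    rw [← himg, Finset.sum_image (fun i _ i' _ h => e.injective h)]
  have hcsk : cs ≤ k := hS
  set f : Fin cs → Fin m := fun i => ⟨(i : ℕ), lt_of_lt_of_le i.2 (hcsk.trans hkm)⟩ with hf
  have key : ∀ i : Fin cs, c (e i) ≤ c (f i) := by
    intro i
    apply hc
    have hsm : StrictMono (fun i : Fin cs => ((e i : Fin m) : ℕ)) := by
      intro a b hab
      exact e.strictMono hab
    have := strictMonoNat_le _ hsm i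
    rw [Fin.le_def]
    simpa [f] using this
  have h2 : ∑ i : Fin cs, c (e i) ≤ ∑ i : Fin cs, c (f i) :=
    Finset.sum_le_sum fun i _ => key i
  have hfinj : Function.Injective f := by
    intro a b hab
    have h5 := congrArg Fin.val hab
    exact Fin.ext h5
  have h3 : ∑ i : Fin cs, c (f i) = ∑ j ∈ Finset.univ.image f, c j :=
    (Finset.sum_image fun a _ b _ h => hfinj h).symm
  have h4 : Finset.univ.image f ⊆ Finset.univ.filter (fun j : Fin m => (j : ℕ) < k) := by
    intro x hx
    simp only [Finset.mem_image, Finset.mem_univ, true_and] at hx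
    obtain ⟨i, rfl⟩ := hx
    simp only [Finset.mem_filter, Finset.mem_univ, true_and, f]
    exact lt_of_lt_of_le i.2 hcsk
  calc ∑ j ∈ S, c j = ∑ i : Fin cs, c (e i) := h1
    _ ≤ ∑ i : Fin cs, c (f i) := h2
    _ = ∑ j ∈ Finset.univ.image f, c j := h3
    _ ≤ _ := Finset.sum_le_sum_of_subset_of_nonneg h4 fun j _ _ => hc0 j

lemma card_filter_lt {m k : ℕ} (hkm : k ≤ m) :
    (Finset.univ.filter fun j : Fin m => (j : ℕ) < k).card = k := by
  have h : (Finset.univ.filter fun j : Fin m => (j : ℕ) < k)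
      = Finset.image (Fin.castLE hkm) Finset.univ := by
    ext j
    simp only [Finset.mem_filter, Finset.mem_univ, true_and, Finset.mem_image]
    constructor
    · intro hj; exact ⟨⟨(j : ℕ), hj⟩, Fin.ext rfl⟩
    · rintro ⟨i, rfl⟩; exact i.2
  rw [h, Finset.card_image_of_injective _ (Fin.castLE_injective hkm)]
  simp

/-- the Fenchel conjugate of `gs_k` is half the sum of the `k`
largest values of `(1/d_j)·‖θ̃_{s_j}‖₂²`. -/
theorem gsk_conj {n m : ℕ} (k : ℕ) (hk1 : 1 ≤ k) (hkm : k ≤ m)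
    (s : Fin m → Finset (Fin n))
    (hdisj : ∀ j j', j ≠ j' → Disjoint (s j) (s j'))
    (hcover : ∀ i, ∃ j, i ∈ s j)
    (d : Fin m → ℝ) (hd : ∀ j, 0 < d j)
    (y : Fin n → ℝ) (σ : Equiv.Perm (Fin m))
    (hσ : Antitone fun j => (1 / d (σ j)) * ∑ i ∈ s (σ j), (y i) ^ 2) :
    fconj (gsk s d k) y
      = ((((1 : ℝ) / 2) * ∑ j ∈ Finset.univ.filter (fun j : Fin m => (j : ℕ) < k),
          (1 / d (σ j)) * ∑ i ∈ s (σ j), (y i) ^ 2 : ℝ) : EReal) := by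

  classical
  set b : Fin m → ℝ := fun j => (1 / d j) * ∑ i ∈ s j, (y i) ^ 2 with hbdef
  have hb0 : ∀ j, 0 ≤ b j := by
    intro j
    exact mul_nonneg (one_div_nonneg.mpr (hd j).le) (Finset.sum_nonneg fun i _ => sq_nonneg _)
  set RHSreal : ℝ :=
    ((1 : ℝ) / 2) * ∑ j ∈ Finset.univ.filter (fun j : Fin m => (j : ℕ) < k), b (σ j)
    with hRHS
  -- partition of the index set
  have hU : Finset.univ.biUnion s = (Finset.univ : Finset (Fin n)) := by
    ext i
    simp only [Finset.mem_biUnion, Finset.mem_univ, true_and, iff_true]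
    exact hcover i
  have hpart : ∀ f : Fin n → ℝ, ∑ i, f i = ∑ j, ∑ i ∈ s j, f i := by
    intro f
    rw [← hU, Finset.sum_biUnion (fun j _ j' _ hne => hdisj j j' hne)]
  -- group index function
  set g : Fin n → Fin m := fun i => Classical.choose (hcover i) with hgdef
  have hg : ∀ i : Fin n, i ∈ s (g i) := fun i => Classical.choose_spec (hcover i)
  have huniq : ∀ i j, i ∈ s j → g i = j := by
    intro i j hij
    by_contra hne
    exact (Finset.disjoint_left.mp (hdisj _ _ hne) (hg i)) hij
  -- pointwise AM-GM
  have hpt : ∀ (j : Fin m) (t y' : ℝ), y' * t - d j / 2 * t ^ 2 ≤ y' ^ 2 / (2 * d j) := by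
    intro j t y'
    have hdj := hd j
    rw [le_div_iff₀ (by positivity)]
    nlinarith [sq_nonneg (y' - d j * t)]
  -- per-group bound
  have hgrp : ∀ (j : Fin m) (θ : Fin n → ℝ),
      (∑ i ∈ s j, y i * θ i) - d j / 2 * ∑ i ∈ s j, (θ i) ^ 2 ≤ (1 / 2) * b j := by
    intro j θ
    have h1 : (∑ i ∈ s j, y i * θ i) - d j / 2 * ∑ i ∈ s j, (θ i) ^ 2
        = ∑ i ∈ s j, (y i * θ i - d j / 2 * (θ i) ^ 2) := by
      rw [Finset.mul_sum, ← Finset.sum_sub_distrib]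
    rw [h1]
    calc ∑ i ∈ s j, (y i * θ i - d j / 2 * (θ i) ^ 2)
        ≤ ∑ i ∈ s j, (y i) ^ 2 / (2 * d j) :=
          Finset.sum_le_sum fun i _ => hpt j (θ i) (y i)
      _ = (1 / 2) * b j := by
          rw [← Finset.sum_div, hbdef]
          rw [div_eq_mul_inv, mul_inv]
          ring
  -- main real upper bound
  have hupper : ∀ θ : Fin n → ℝ, nnzGroups s θ ≤ k →
      (∑ i, y i * θ i) - ((1 : ℝ) / 2) * ∑ j, d j * ∑ i ∈ s j, (θ i) ^ 2 ≤ RHSreal := by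
    intro θ hθ
    set T : Finset (Fin m) := Finset.univ.filter fun j => groupProj (s j) θ ≠ 0 with hT
    have hsplit : (∑ i, y i * θ i) - ((1 : ℝ) / 2) * ∑ j, d j * ∑ i ∈ s j, (θ i) ^ 2
        = ∑ j, ((∑ i ∈ s j, y i * θ i) - d j / 2 * ∑ i ∈ s j, (θ i) ^ 2) := by
      rw [hpart (fun i => y i * θ i), Finset.mul_sum, ← Finset.sum_sub_distrib]
      exact Finset.sum_congr rfl fun j _ => by ring
    rw [hsplit]
    have hzero : ∀ j ∈ (Finset.univ : Finset (Fin m)), j ∉ T →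
        ((∑ i ∈ s j, y i * θ i) - d j / 2 * ∑ i ∈ s j, (θ i) ^ 2) = 0 := by
      intro j _ hj
      have hz : groupProj (s j) θ = 0 := by
        simpa [hT] using hj
      have hθ0 : ∀ i ∈ s j, θ i = 0 := by
        intro i hi
        have h := congrFun hz i
        simpa [groupProj, hi] using h
      have e1 : ∑ i ∈ s j, y i * θ i = 0 :=
        Finset.sum_eq_zero fun i hi => by rw [hθ0 i hi, mul_zero]
      have e2 : ∑ i ∈ s j, (θ i) ^ 2 = 0 :=
        Finset.sum_eq_zero fun i hi => by rw [hθ0 i hi]; ring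
      rw [e1, e2]; ring
    rw [← Finset.sum_subset (Finset.subset_univ T) hzero]
    have hcardT : T.card ≤ k := hθ
    have hbσ : ∑ j ∈ T, b j
        ≤ ∑ j ∈ Finset.univ.filter (fun j : Fin m => (j : ℕ) < k), b (σ j) := by
      have hinj : ∀ a ∈ T, ∀ a' ∈ T, σ.symm a = σ.symm a' → a = a' :=
        fun a _ a' _ h => σ.symm.injective h
      have himg : ∑ j ∈ T.image σ.symm, b (σ j) = ∑ j ∈ T, b j := by
        rw [Finset.sum_image hinj]
        exact Finset.sum_congr rfl fun j _ => by rw [Equiv.apply_symm_apply]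
      have hcard : (T.image σ.symm).card ≤ k := le_trans Finset.card_image_le hcardT
      have h := topk_le hkm (fun j => b (σ j)) (fun j => hb0 _) hσ (T.image σ.symm) hcard
      linarith [himg.le, himg.ge]
    calc ∑ j ∈ T, ((∑ i ∈ s j, y i * θ i) - d j / 2 * ∑ i ∈ s j, (θ i) ^ 2)
        ≤ ∑ j ∈ T, (1 / 2) * b j := Finset.sum_le_sum fun j _ => hgrp j θ
      _ = (1 / 2) * ∑ j ∈ T, b j := by rw [Finset.mul_sum]
      _ ≤ RHSreal := by
          rw [hRHS]
          have h2 : (0:ℝ) ≤ 1/2 := by norm_num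
          exact mul_le_mul_of_nonneg_left hbσ h2
  -- the maximizer
  set K : Finset (Fin m) := (Finset.univ.filter fun j : Fin m => (j : ℕ) < k).image σ with hK
  have hKcard : K.card ≤ k := le_trans Finset.card_image_le (le_of_eq (card_filter_lt hkm))
  set θs : Fin n → ℝ := fun i => if g i ∈ K then y i / d (g i) else 0 with hθs
  have hgval : ∀ j ∈ K, ∀ i ∈ s j, θs i = y i / d j := by
    intro j hjK i hi
    have hgi : g i = j := huniq i j hi
    simp [hθs, hgi, hjK]
  have hgval0 : ∀ (j) (_ : j ∉ K), ∀ i ∈ s j, θs i = 0 := by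
    intro j hjK i hi
    have hgi : g i = j := huniq i j hi
    simp [hθs, hgi, hjK]
  have hnnz : nnzGroups s θs ≤ k := by
    refine le_trans (Finset.card_le_card ?_) hKcard
    intro j hj
    simp only [Finset.mem_filter, Finset.mem_univ, true_and] at hj
    obtain ⟨i, hi⟩ := Function.ne_iff.mp hj
    simp only [groupProj, Pi.zero_apply] at hi
    by_cases his : i ∈ s j
    · rw [if_pos his] at hi
      by_contra hjK
      exact hi (hgval0 j hjK i his)
    · rw [if_neg his] at hi; exact absurd rfl hi
  have hval1 : ∑ i, y i * θs i = ∑ j ∈ K, b j := by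
    rw [hpart (fun i => y i * θs i)]
    rw [← Finset.sum_subset (Finset.subset_univ K)
      (fun j _ hj => Finset.sum_eq_zero fun i hi => by rw [hgval0 j hj i hi, mul_zero])]
    refine Finset.sum_congr rfl fun j hj => ?_
    simp only [hbdef, Finset.mul_sum]
    refine Finset.sum_congr rfl fun i hi => ?_
    rw [hgval j hj i hi]
    ring
  have hval2 : ∑ j, d j * ∑ i ∈ s j, (θs i) ^ 2 = ∑ j ∈ K, b j := by
    rw [← Finset.sum_subset (Finset.subset_univ K)
      (fun j _ hj => by
        rw [Finset.sum_eq_zero fun i hi => by rw [hgval0 j hj i hi]; ring, mul_zero])]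
    refine Finset.sum_congr rfl fun j hj => ?_
    simp only [hbdef, Finset.mul_sum]
    refine Finset.sum_congr rfl fun i hi => ?_
    rw [hgval j hj i hi]
    have hdj := (hd j).ne'
    field_simp
  have hKsum : ∑ j ∈ K, b j
      = ∑ j ∈ Finset.univ.filter (fun j : Fin m => (j : ℕ) < k), b (σ j) := by
    rw [hK]
    exact Finset.sum_image fun a _ a' _ h => σ.injective h
  -- putting it together
  have hRHSeq : ((((1 : ℝ) / 2) * ∑ j ∈ Finset.univ.filter (fun j : Fin m => (j : ℕ) < k),
      (1 / d (σ j)) * ∑ i ∈ s (σ j), (y i) ^ 2 : ℝ) : EReal) = (RHSreal : EReal) := by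
    norm_cast
  rw [hRHSeq]
  apply le_antisymm
  · refine iSup_le fun θ => ?_
    by_cases h : nnzGroups s θ ≤ k
    · rw [gsk, if_pos h, ← EReal.coe_sub, EReal.coe_le_coe_iff]
      exact hupper θ h
    · rw [gsk, if_neg h]
      have hb : ((∑ i, y i * θ i : ℝ) : EReal) - ⊤ = ⊥ := by
        rw [sub_eq_add_neg, EReal.neg_top, EReal.add_bot]
      rw [hb]
      exact bot_le
  · have hgskθ : gsk s d k θs
        = ((((1 : ℝ) / 2) * ∑ j, d j * ∑ i ∈ s j, (θs i) ^ 2 : ℝ) : EReal) := by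
      rw [gsk, if_pos hnnz]
    have hvalue : ((∑ i, y i * θs i : ℝ) : EReal) - gsk s d k θs = (RHSreal : EReal) := by
      rw [hgskθ, ← EReal.coe_sub, EReal.coe_eq_coe_iff, hval1, hval2, hRHS, hKsum]
      ring
    calc (RHSreal : EReal) = ((∑ i, y i * θs i : ℝ) : EReal) - gsk s d k θs := hvalue.symm
      _ ≤ fconj (gsk s d k) y :=
        le_iSup (fun θ => ((∑ i, y i * θ i : ℝ) : EReal) - gsk s d k θ) θs
end
end

section
/- The biconjugate of gs_k admits the variational representation GS_k(θ) = (1/2)·min_{u ∈ B_k} Σ_{j=1}^m d_j·φ(θ_{s_j}, u_j), where B_k = {u ∈ ℝ^m : 0 ≤ u_j ≤ 1, Σ_j u_j ≤ k}, and φ(v, t) = ‖v‖₂²/t if t > 0, φ(v,0) = 0 if v = 0, and φ(v,t) = +∞ otherwise. In particular the minimum over B_k is attained. -/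
open Finset

noncomputable section
open scoped Classical BigOperators

lemma exists_topk_set {m : ℕ} (a : Fin m → ℝ) :
    ∀ k : ℕ, k ≤ m → ∃ T : Finset (Fin m), T.card = k ∧ ∀ j ∈ T, ∀ j' ∉ T, a j' ≤ a j := by
  intro k
  induction k with
  | zero => intro _; exact ⟨∅, card_empty, by simp⟩
  | succ k ih =>
    intro hk
    obtain ⟨T, hcard, hT⟩ := ih (Nat.le_of_succ_le hk)
    have hne : (Tᶜ : Finset (Fin m)).Nonempty := by
      rw [← card_pos, card_compl, Fintype.card_fin, hcard]
      omega
    obtain ⟨j₀, hj₀mem, hj₀max⟩ := Finset.exists_max_image Tᶜ a hne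
    have hj₀T : j₀ ∉ T := by simpa using hj₀mem
    refine ⟨insert j₀ T, by rw [card_insert_of_notMem hj₀T, hcard], ?_⟩
    intro j hj j' hj'
    rcases Finset.mem_insert.1 hj with rfl | hjT
    · exact hj₀max j' (by simp [Finset.mem_compl] at hj' ⊢; exact fun h => (hj'.2 h).elim)
    · exact hT j hjT j' fun h => hj' (Finset.mem_insert_of_mem h)

lemma frac_le_topk {m k : ℕ} (hk1 : 1 ≤ k) (hkm : k ≤ m) (a u : Fin m → ℝ)
    (ha : ∀ j, 0 ≤ a j) (hu : ∀ j, 0 ≤ u j ∧ u j ≤ 1) (husum : ∑ j, u j ≤ (k : ℝ)) :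
    ∃ T : Finset (Fin m), T.card ≤ k ∧ ∑ j, u j * a j ≤ ∑ j ∈ T, a j := by
  obtain ⟨T, hcard, hT⟩ := exists_topk_set a k hkm
  have hTne : T.Nonempty := card_pos.1 (by omega)
  obtain ⟨j₁, hj₁, hmin⟩ := Finset.exists_min_image T a hTne
  set τ := a j₁ with hτ
  have hτ0 : 0 ≤ τ := ha j₁
  refine ⟨T, le_of_eq hcard, ?_⟩
  have h1 : ∑ j ∈ Tᶜ, u j * a j ≤ ∑ j ∈ Tᶜ, u j * τ := by
    refine Finset.sum_le_sum fun j hj => ?_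
    have : a j ≤ τ := hT j₁ hj₁ j (by simpa using hj)
    exact mul_le_mul_of_nonneg_left this (hu j).1
  have h2 : ∑ j ∈ T, u j * a j ≤ ∑ j ∈ T, (a j - (1 - u j) * τ) := by
    refine Finset.sum_le_sum fun j hj => ?_
    have h3 : τ ≤ a j := hmin j hj
    nlinarith [(hu j).1, (hu j).2]
  have hsplit : ∑ j, u j * a j = ∑ j ∈ T, u j * a j + ∑ j ∈ Tᶜ, u j * a j :=
    (Finset.sum_add_sum_compl T _).symm
  have husplit : ∑ j ∈ T, u j + ∑ j ∈ Tᶜ, u j = ∑ j, u j :=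
    Finset.sum_add_sum_compl T u
  have e1 : ∑ j ∈ T, (a j - (1 - u j) * τ) =
      ∑ j ∈ T, a j - ((k : ℝ) - ∑ j ∈ T, u j) * τ := by
    rw [Finset.sum_sub_distrib]
    congr 1
    rw [← Finset.sum_mul]
    congr 1
    rw [Finset.sum_sub_distrib, Finset.sum_const, hcard]
    simp
  have e2 : ∑ j ∈ Tᶜ, u j * τ = (∑ j ∈ Tᶜ, u j) * τ := (Finset.sum_mul _ _ _).symm
  have hτmul : ((∑ j, u j) - (k:ℝ)) * τ ≤ 0 :=
    mul_nonpos_of_nonpos_of_nonneg (by linarith) hτ0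
  nlinarith [hsplit, h1, h2, e1, e2, husplit]

lemma sum_partition {n m : ℕ} (s : Fin m → Finset (Fin n))
    (hdisj : ∀ j j', j ≠ j' → Disjoint (s j) (s j')) (hcover : ∀ i, ∃ j, i ∈ s j)
    (f : Fin n → ℝ) : ∑ i, f i = ∑ j, ∑ i ∈ s j, f i := by
  rw [← Finset.sum_biUnion (fun j _ j' _ hjj' => hdisj j j' hjj')]
  congr 1
  ext i
  simpa using hcover i

lemma mem_group_unique {n m : ℕ} {s : Fin m → Finset (Fin n)}
    (hdisj : ∀ j j', j ≠ j' → Disjoint (s j) (s j')) {i : Fin n} {j j' : Fin m}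
    (h : i ∈ s j) (h' : i ∈ s j') : j = j' := by
  by_contra hne
  exact (Finset.disjoint_left.1 (hdisj j j' hne)) h h'

lemma groupProj_eq_zero_iff {n : ℕ} {s : Finset (Fin n)} {θ : Fin n → ℝ} :
    groupProj s θ = 0 ↔ ∀ i ∈ s, θ i = 0 := by
  constructor
  · intro h i hi
    have := congrFun h i
    simpa [groupProj, hi] using this
  · intro h
    funext i
    by_cases hi : i ∈ s
    · simpa [groupProj, hi] using h i hi
    · simp [groupProj, hi]

lemma ereal_coe_sum {α : Type*} (s : Finset α) (f : α → ℝ) :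
    ((∑ i ∈ s, f i : ℝ) : EReal) = ∑ i ∈ s, ((f i : ℝ) : EReal) :=
  map_sum (⟨⟨(fun x : ℝ => (x : EReal)), EReal.coe_zero⟩, fun x y => EReal.coe_add x y⟩ : ℝ →+ EReal) f s

lemma sum_sq_groupProj {n : ℕ} (s : Finset (Fin n)) (θ : Fin n → ℝ) :
    ∑ i, (groupProj s θ i) ^ 2 = ∑ i ∈ s, (θ i) ^ 2 := by
  rw [← Finset.sum_filter_add_sum_filter_not Finset.univ (fun i => i ∈ s)]
  have h1 : ∀ i ∈ Finset.univ.filter (fun i => i ∈ s), (groupProj s θ i)^2 = (θ i)^2 := by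
    intro i hi; simp only [Finset.mem_filter] at hi; simp [groupProj, hi.2]
  have h2 : ∀ i ∈ Finset.univ.filter (fun i => ¬ i ∈ s), (groupProj s θ i)^2 = 0 := by
    intro i hi; simp only [Finset.mem_filter] at hi; simp [groupProj, hi.2]
  rw [Finset.sum_congr rfl h1, Finset.sum_congr rfl h2]
  simp [Finset.sum_filter]

/-- Lower bound for the conjugate of gsk. -/
lemma le_fconj_gsk {n m : ℕ} {k : ℕ} (s : Fin m → Finset (Fin n))
    (hdisj : ∀ j j', j ≠ j' → Disjoint (s j) (s j')) (hcover : ∀ i, ∃ j, i ∈ s j)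
    (d : Fin m → ℝ) (hd : ∀ j, 0 < d j) (y : Fin n → ℝ)
    (T : Finset (Fin m)) (hT : T.card ≤ k) :
    ((∑ j ∈ T, (∑ i ∈ s j, (y i) ^ 2) / (2 * d j) : ℝ) : EReal) ≤ fconj (gsk s d k) y := by
  set θT : Fin n → ℝ := fun i => ∑ j ∈ T, if i ∈ s j then y i / d j else 0 with hθT
  have hval : ∀ j ∈ T, ∀ i ∈ s j, θT i = y i / d j := by
    intro j hj i hi
    rw [hθT]
    simp only
    rw [Finset.sum_eq_single j]
    · simp [hi]
    · intro j' hj' hne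
      have : i ∉ s j' := fun h => hne (mem_group_unique hdisj h hi)
      simp [this]
    · intro h; exact absurd hj h
  have hval0 : ∀ j ∉ T, ∀ i ∈ s j, θT i = 0 := by
    intro j hj i hi
    rw [hθT]
    simp only
    apply Finset.sum_eq_zero
    intro j' hj'
    have : i ∉ s j' := fun h => hj (by rwa [mem_group_unique hdisj hi h])
    simp [this]
  have hnnz : nnzGroups s θT ≤ k := by
    refine le_trans (le_trans (Finset.card_le_card ?_) le_rfl) hT
    intro j hj
    simp only [Finset.mem_filter, Finset.mem_univ, true_and] at hj
    by_contra hjT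
    exact hj (groupProj_eq_zero_iff.2 (hval0 j hjT))
  have hgroup : ∀ j, d j * ∑ i ∈ s j, (θT i) ^ 2 =
      if j ∈ T then (∑ i ∈ s j, (y i) ^ 2) / d j else 0 := by
    intro j
    by_cases hj : j ∈ T
    · rw [if_pos hj]
      rw [Finset.sum_congr rfl (fun i hi => by rw [hval j hj i hi])]
      have : ∑ i ∈ s j, (y i / d j) ^ 2 = (∑ i ∈ s j, (y i) ^ 2) / (d j) ^ 2 := by
        rw [Finset.sum_div]
        exact Finset.sum_congr rfl fun i _ => by ring
      rw [this, sq (d j), ← div_div, mul_div_cancel₀ _ (ne_of_gt (hd j))]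
    · rw [if_neg hj]
      rw [Finset.sum_congr rfl (fun i hi => by rw [hval0 j hj i hi])]
      simp
  have hinner : ∑ i, y i * θT i = ∑ j ∈ T, (∑ i ∈ s j, (y i) ^ 2) / d j := by
    rw [sum_partition s hdisj hcover]
    rw [← Finset.sum_filter_add_sum_filter_not Finset.univ (fun j => j ∈ T)]
    have e2 : ∑ j ∈ Finset.univ.filter (fun j => ¬ j ∈ T), ∑ i ∈ s j, y i * θT i = 0 := by
      apply Finset.sum_eq_zero
      intro j hj
      simp only [Finset.mem_filter] at hj
      apply Finset.sum_eq_zero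
      intro i hi
      rw [hval0 j hj.2 i hi, mul_zero]
    rw [e2, add_zero]
    have e3 : Finset.univ.filter (fun j => j ∈ T) = T := by ext j; simp
    rw [e3]
    refine Finset.sum_congr rfl fun j hj => ?_
    rw [Finset.sum_div]
    refine Finset.sum_congr rfl fun i hi => ?_
    rw [hval j hj i hi]
    ring
  have hgskval : gsk s d k θT =
      ((1 : ℝ) / 2 * ∑ j ∈ T, (∑ i ∈ s j, (y i) ^ 2) / d j : ℝ) := by
    rw [gsk, if_pos hnnz]
    congr 1
    congr 1
    rw [Finset.sum_congr rfl (fun j _ => hgroup j)]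
    simp [Finset.sum_ite_mem]
  have hle : ((∑ i, y i * θT i : ℝ) : EReal) - gsk s d k θT ≤ fconj (gsk s d k) y :=
    le_iSup (fun θ' => ((∑ i, y i * θ' i : ℝ) : EReal) - gsk s d k θ') θT
  refine le_trans (le_of_eq ?_) hle
  rw [hgskval, hinner, ← EReal.coe_sub, EReal.coe_eq_coe_iff]
  rw [Finset.mul_sum, ← Finset.sum_sub_distrib]
  refine Finset.sum_congr rfl fun j hj => ?_
  have : d j ≠ 0 := ne_of_gt (hd j)
  field_simp
  ring

/-- Upper bound for the conjugate of gsk. -/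
lemma fconj_gsk_le {n m : ℕ} {k : ℕ} (s : Fin m → Finset (Fin n))
    (hdisj : ∀ j j', j ≠ j' → Disjoint (s j) (s j')) (hcover : ∀ i, ∃ j, i ∈ s j)
    (d : Fin m → ℝ) (hd : ∀ j, 0 < d j) (y : Fin n → ℝ) (c : ℝ)
    (hc : ∀ S : Finset (Fin m), S.card ≤ k →
      ∑ j ∈ S, (∑ i ∈ s j, (y i) ^ 2) / (2 * d j) ≤ c) :
    fconj (gsk s d k) y ≤ (c : EReal) := by
  apply iSup_le
  intro θ'
  by_cases hnn : nnzGroups s θ' ≤ k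
  · rw [gsk, if_pos hnn, ← EReal.coe_sub, EReal.coe_le_coe_iff]
    set S := Finset.univ.filter (fun j => groupProj (s j) θ' ≠ 0) with hS
    have hScard : S.card ≤ k := hnn
    have key : ∀ j, ∑ i ∈ s j, y i * θ' i - d j * (∑ i ∈ s j, (θ' i) ^ 2) / 2 ≤
        (if j ∈ S then (∑ i ∈ s j, (y i) ^ 2) / (2 * d j) else 0) := by
      intro j
      by_cases hj : j ∈ S
      · rw [if_pos hj]
        have hterm : ∀ i ∈ s j, y i * θ' i - d j * (θ' i) ^ 2 / 2 ≤ (y i) ^ 2 / (2 * d j) := by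
          intro i _
          have h1 := hd j
          have h2 := sq_nonneg (y i - d j * θ' i)
          rw [le_div_iff₀ (by linarith : (0:ℝ) < 2 * d j)]
          nlinarith
        calc ∑ i ∈ s j, y i * θ' i - d j * (∑ i ∈ s j, (θ' i) ^ 2) / 2
            = ∑ i ∈ s j, (y i * θ' i - d j * (θ' i) ^ 2 / 2) := by
              rw [Finset.sum_sub_distrib, Finset.mul_sum, Finset.sum_div]
          _ ≤ ∑ i ∈ s j, (y i) ^ 2 / (2 * d j) := Finset.sum_le_sum hterm
          _ = (∑ i ∈ s j, (y i) ^ 2) / (2 * d j) := by rw [Finset.sum_div]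
      · rw [if_neg hj]
        have hz : ∀ i ∈ s j, θ' i = 0 := by
          intro i hi
          have : groupProj (s j) θ' = 0 := by
            by_contra hne
            exact hj (by simp [hS, hne])
          exact groupProj_eq_zero_iff.1 this i hi
        have e1 : ∑ i ∈ s j, y i * θ' i = 0 :=
          Finset.sum_eq_zero fun i hi => by rw [hz i hi, mul_zero]
        have e2 : ∑ i ∈ s j, (θ' i) ^ 2 = 0 :=
          Finset.sum_eq_zero fun i hi => by rw [hz i hi]; ring
        rw [e1, e2]
        simp
    calc ∑ i, y i * θ' i - (1 : ℝ) / 2 * ∑ j, d j * ∑ i ∈ s j, (θ' i) ^ 2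
        = ∑ j, (∑ i ∈ s j, y i * θ' i - d j * (∑ i ∈ s j, (θ' i) ^ 2) / 2) := by
          rw [Finset.sum_sub_distrib, ← sum_partition s hdisj hcover]
          congr 1
          rw [Finset.mul_sum]
          exact Finset.sum_congr rfl fun j _ => by ring
      _ ≤ ∑ j, (if j ∈ S then (∑ i ∈ s j, (y i) ^ 2) / (2 * d j) else 0) :=
          Finset.sum_le_sum fun j _ => key j
      _ = ∑ j ∈ S, (∑ i ∈ s j, (y i) ^ 2) / (2 * d j) := by
          rw [Finset.sum_ite_mem, Finset.univ_inter]
      _ ≤ c := hc S hScard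
  · rw [gsk, if_neg hnn, EReal.sub_top]
    exact bot_le

/-- Water-filling existence. -/
lemma exists_waterfill {m k : ℕ} (hk1 : 1 ≤ k) (hkm : k ≤ m)
    (b : Fin m → ℝ) (hb : ∀ j, 0 ≤ b j) :
    ∃ lam : ℝ, ∃ u : Fin m → ℝ, 0 ≤ lam ∧ (∀ j, 0 ≤ u j ∧ u j ≤ 1) ∧
      (∑ j, u j ≤ (k : ℝ)) ∧ (∀ j, u j = 0 → b j = 0) ∧
      (∀ j, 0 < u j → u j < 1 → b j = lam ^ 2 * (u j) ^ 2) ∧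
      (∀ j, u j = 1 → lam ^ 2 ≤ b j) ∧ (lam = 0 ∨ ∑ j, u j = (k : ℝ)) := by
  set P := Finset.univ.filter (fun j => b j ≠ 0) with hP
  by_cases hPk : P.card ≤ k
  · -- few nonzero groups : take u the indicator of the support, lam = 0
    refine ⟨0, fun j => if b j = 0 then 0 else 1, le_rfl, ?_, ?_, ?_, ?_, ?_, Or.inl rfl⟩
    · intro j; by_cases h : b j = 0 <;> simp [h]
    · have : ∑ j, (if b j = 0 then (0:ℝ) else 1) = P.card := by
        rw [hP, Finset.card_filter, Nat.cast_sum]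
        refine Finset.sum_congr rfl fun j _ => ?_
        by_cases h : b j = 0 <;> simp [h]
      rw [this]
      exact_mod_cast hPk
    · intro j hj
      by_cases h : b j = 0
      · exact h
      · simp [h] at hj
    · intro j h1 h2
      by_cases h : b j = 0 <;> simp [h] at h1 h2 <;> linarith
    · intro j _; simpa using hb j
  · -- many nonzero groups : water-filling via IVT
    push_neg at hPk
    have hPne : P.Nonempty := Finset.card_pos.1 (by omega)
    obtain ⟨j₁, hj₁P, hj₁min⟩ := Finset.exists_min_image P (fun j => Real.sqrt (b j)) hPne
    have hbj₁ : 0 < b j₁ := by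
      rcases (hb j₁).lt_or_eq with h | h
      · exact h
      · exfalso; rw [hP] at hj₁P; simp at hj₁P; exact hj₁P h.symm
    set lam₁ := Real.sqrt (b j₁) with hlam₁def
    have hlam₁ : 0 < lam₁ := Real.sqrt_pos.2 hbj₁
    set lam₂ := max lam₁ ((∑ j, Real.sqrt (b j)) / k) with hlam₂def
    have hlam₁₂ : lam₁ ≤ lam₂ := le_max_left _ _
    have hlam₂pos : 0 < lam₂ := lt_of_lt_of_le hlam₁ hlam₁₂
    set g : ℝ → ℝ := fun lam => ∑ j, min 1 (Real.sqrt (b j) / lam) with hg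
    have hgcont : ContinuousOn g (Set.Icc lam₁ lam₂) := by
      apply continuousOn_finset_sum
      intro j _
      exact ContinuousOn.inf continuousOn_const (continuousOn_const.div continuousOn_id
        (fun x hx => ne_of_gt (lt_of_lt_of_le hlam₁ hx.1)))
    have hkpos : (0:ℝ) < k := by exact_mod_cast hk1
    have hg₂ : g lam₂ ≤ k := by
      have h1 : ∀ j, min 1 (Real.sqrt (b j) / lam₂) ≤ Real.sqrt (b j) / lam₂ :=
        fun j => min_le_right _ _
      have h2 : g lam₂ ≤ (∑ j, Real.sqrt (b j)) / lam₂ := by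
        rw [hg, Finset.sum_div]
        exact Finset.sum_le_sum fun j _ => h1 j
      have h3 : (∑ j, Real.sqrt (b j)) / lam₂ ≤ k := by
        rw [div_le_iff₀ hlam₂pos]
        have h4 : (∑ j, Real.sqrt (b j)) / k ≤ lam₂ := le_max_right _ _
        rw [div_le_iff₀ hkpos] at h4
        linarith
      linarith
    have hg₁ : (k:ℝ) ≤ g lam₁ := by
      have h1 : ∀ j ∈ P, min 1 (Real.sqrt (b j) / lam₁) = 1 := by
        intro j hj
        have : lam₁ ≤ Real.sqrt (b j) := hj₁min j hj
        rw [min_eq_left]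
        rw [le_div_iff₀ hlam₁]
        linarith
      have h2 : (P.card : ℝ) ≤ g lam₁ := by
        rw [hg]
        calc (P.card : ℝ) = ∑ j ∈ P, (1:ℝ) := by simp
          _ = ∑ j ∈ P, min 1 (Real.sqrt (b j) / lam₁) :=
              (Finset.sum_congr rfl fun j hj => (h1 j hj).symm)
          _ ≤ ∑ j, min 1 (Real.sqrt (b j) / lam₁) := by
              apply Finset.sum_le_sum_of_subset_of_nonneg (Finset.subset_univ P)
              intro j _ _
              exact le_min zero_le_one (div_nonneg (Real.sqrt_nonneg _) hlam₁.le)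
      have h3 : (k:ℝ) < P.card := by exact_mod_cast hPk
      linarith
    have hIVT : (k:ℝ) ∈ g '' (Set.Icc lam₁ lam₂) := by
      apply intermediate_value_Icc' hlam₁₂ hgcont
      exact ⟨hg₂, hg₁⟩
    obtain ⟨lam, hlammem, hglam⟩ := hIVT
    have hlampos : 0 < lam := lt_of_lt_of_le hlam₁ hlammem.1
    refine ⟨lam, fun j => min 1 (Real.sqrt (b j) / lam), hlampos.le, ?_, ?_, ?_, ?_, ?_, Or.inr ?_⟩
    · intro j
      exact ⟨le_min zero_le_one (div_nonneg (Real.sqrt_nonneg _) hlampos.le), min_le_left _ _⟩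
    · exact le_of_eq hglam
    · intro j hj
      simp only at hj
      rcases le_or_gt 1 (Real.sqrt (b j) / lam) with h | h
      · rw [min_eq_left h] at hj; linarith
      · rw [min_eq_right h.le] at hj
        have : Real.sqrt (b j) = 0 := by
          field_simp at hj
          simpa using hj
        have := Real.sqrt_eq_zero (hb j) |>.1 this
        exact this
    · intro j h1 h2
      simp only at h1 h2 ⊢
      rcases le_or_gt 1 (Real.sqrt (b j) / lam) with h | h
      · rw [min_eq_left h] at h2; linarith
      · rw [min_eq_right h.le]
        have e : lam ^ 2 * (Real.sqrt (b j) / lam) ^ 2 = Real.sqrt (b j) ^ 2 := by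
          field_simp
        rw [e, Real.sq_sqrt (hb j)]
    · intro j hj
      simp only at hj
      rcases le_or_gt 1 (Real.sqrt (b j) / lam) with h | h
      · have h2 : lam ≤ Real.sqrt (b j) := by
          rw [le_div_iff₀ hlampos] at h; linarith
        calc lam ^ 2 ≤ Real.sqrt (b j) ^ 2 := by nlinarith [hlampos.le]
          _ = b j := Real.sq_sqrt (hb j)
      · rw [min_eq_right h.le] at hj
        linarith
    · exact hglam

/-- the biconjugate `GS_k = gs_k**` admits the variational
representation `GS_k(θ) = (1/2)·min_{u ∈ B_k} Σ_j d_j·φ(θ_{s_j}, u_j)`, the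
minimum being attained. -/
theorem biconj_variational {n m : ℕ} (k : ℕ) (hk1 : 1 ≤ k) (hkm : k ≤ m)
    (s : Fin m → Finset (Fin n))
    (hdisj : ∀ j j', j ≠ j' → Disjoint (s j) (s j'))
    (hcover : ∀ i, ∃ j, i ∈ s j)
    (d : Fin m → ℝ) (hd : ∀ j, 0 < d j)
    (θ : Fin n → ℝ) :
    IsLeast
      {x : EReal | ∃ u ∈ Bk m k,
        x = (((1 : ℝ) / 2 : ℝ) : EReal) * ∑ j, ((d j : ℝ) : EReal) * phi (groupProj (s j) θ) (u j)}
      (fconj (fconj (gsk s d k)) θ) := by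
  classical
  set bR : Fin m → ℝ := fun j => d j * ∑ i ∈ s j, (θ i) ^ 2 with hbRdef
  have hbR : ∀ j, 0 ≤ bR j := fun j =>
    mul_nonneg (hd j).le (Finset.sum_nonneg fun i _ => sq_nonneg _)
  -- value of the objective when it is finite
  have hFval : ∀ u : Fin m → ℝ, (∀ j, 0 ≤ u j) → (∀ j, u j = 0 → groupProj (s j) θ = 0) →
      (((1 : ℝ) / 2 : ℝ) : EReal) * ∑ j, ((d j : ℝ) : EReal) * phi (groupProj (s j) θ) (u j)
        = (((∑ j, if u j = 0 then 0 else bR j / u j) / 2 : ℝ) : EReal) := by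
    intro u hu0 huz
    have hterm : ∀ j, ((d j : ℝ) : EReal) * phi (groupProj (s j) θ) (u j)
        = (((if u j = 0 then 0 else bR j / u j) : ℝ) : EReal) := by
      intro j
      by_cases hz : u j = 0
      · rw [if_pos hz, hz, huz j hz]
        rw [phi, if_neg (lt_irrefl 0), if_pos ⟨rfl, rfl⟩]
        simp
      · have hpos : 0 < u j := lt_of_le_of_ne (hu0 j) (Ne.symm hz)
        rw [if_neg hz, phi, if_pos hpos, sum_sq_groupProj, ← EReal.coe_mul,
          EReal.coe_eq_coe_iff]
        simp only [hbRdef]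
        rw [mul_div_assoc']
    rw [Finset.sum_congr rfl (fun j _ => hterm j), ← ereal_coe_sum, ← EReal.coe_mul,
      EReal.coe_eq_coe_iff]
    ring
  -- the biconjugate is a lower bound of the whole family
  have hlb : ∀ u' ∈ Bk m k, fconj (fconj (gsk s d k)) θ ≤
      (((1 : ℝ) / 2 : ℝ) : EReal) * ∑ j, ((d j : ℝ) : EReal) * phi (groupProj (s j) θ) (u' j) := by
    intro u' hu'
    obtain ⟨hu01, husum⟩ := hu'
    by_cases hbad : ∃ j, u' j = 0 ∧ groupProj (s j) θ ≠ 0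
    · obtain ⟨j₀, hj₀z, hj₀ne⟩ := hbad
      have htop : ((d j₀ : ℝ) : EReal) * phi (groupProj (s j₀) θ) (u' j₀) = ⊤ := by
        rw [hj₀z, phi, if_neg (lt_irrefl 0), if_neg (by simp [hj₀ne])]
        exact EReal.coe_mul_top_of_pos (hd j₀)
      have hnonneg : ∀ j, (0 : EReal) ≤ ((d j : ℝ) : EReal) * phi (groupProj (s j) θ) (u' j) := by
        intro j
        apply mul_nonneg (by exact_mod_cast (hd j).le)
        rw [phi]
        split_ifs with h1 h2
        · exact_mod_cast div_nonneg (Finset.sum_nonneg fun i _ => sq_nonneg _) h1.le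
        · exact le_rfl
        · exact le_top
      have hsumtop : ∑ j, ((d j : ℝ) : EReal) * phi (groupProj (s j) θ) (u' j) = ⊤ := by
        refine top_le_iff.1 ?_
        calc (⊤ : EReal) = ((d j₀ : ℝ) : EReal) * phi (groupProj (s j₀) θ) (u' j₀) := htop.symm
          _ ≤ ∑ j, ((d j : ℝ) : EReal) * phi (groupProj (s j) θ) (u' j) :=
            Finset.single_le_sum (fun j _ => hnonneg j) (Finset.mem_univ j₀)
      rw [hsumtop, EReal.coe_mul_top_of_pos (by norm_num : (0:ℝ) < 1/2)]
      exact le_top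
    · push_neg at hbad
      rw [hFval u' (fun j => (hu01 j).1) hbad]
      apply iSup_le
      intro y
      set aR : Fin m → ℝ := fun j => (∑ i ∈ s j, (y i) ^ 2) / (2 * d j) with haRdef
      have haR0 : ∀ j, 0 ≤ aR j := fun j =>
        div_nonneg (Finset.sum_nonneg fun i _ => sq_nonneg _) (by linarith [hd j])
      obtain ⟨T, hTcard, hTle⟩ := frac_le_topk hk1 hkm aR u' haR0 hu01 husum
      have hfc : ((∑ j ∈ T, aR j : ℝ) : EReal) ≤ fconj (gsk s d k) y :=
        le_fconj_gsk s hdisj hcover d hd y T hTcard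
      have hreal : ∑ i, θ i * y i ≤
          (∑ j, if u' j = 0 then 0 else bR j / u' j) / 2 + ∑ j, u' j * aR j := by
        rw [sum_partition s hdisj hcover]
        have hsplit : (∑ j, if u' j = 0 then 0 else bR j / u' j) / 2 + ∑ j, u' j * aR j
            = ∑ j, ((if u' j = 0 then 0 else bR j / u' j) / 2 + u' j * aR j) := by
          rw [Finset.sum_add_distrib, Finset.sum_div]
        rw [hsplit]
        refine Finset.sum_le_sum fun j _ => ?_
        by_cases hz : u' j = 0
        · have hθz : ∀ i ∈ s j, θ i = 0 := groupProj_eq_zero_iff.1 (hbad j hz)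
          rw [if_pos hz, hz]
          have h0 : ∑ i ∈ s j, θ i * y i = 0 :=
            Finset.sum_eq_zero fun i hi => by rw [hθz i hi, zero_mul]
          rw [h0]
          simp
        · have hpos : 0 < u' j := lt_of_le_of_ne (hu01 j).1 (Ne.symm hz)
          rw [if_neg hz]
          have hterm : ∀ i ∈ s j, θ i * y i ≤
              d j * (θ i) ^ 2 / (2 * u' j) + u' j * (y i) ^ 2 / (2 * d j) := by
            intro i _
            have h1 := hd j
            have h2 := sq_nonneg (d j * θ i - u' j * y i)
            have h3 : (0:ℝ) < 2 * u' j := by linarith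
            have h4 : (0:ℝ) < 2 * d j := by linarith
            rw [div_add_div _ _ (ne_of_gt h3) (ne_of_gt h4), le_div_iff₀ (by positivity)]
            nlinarith
          calc ∑ i ∈ s j, θ i * y i
              ≤ ∑ i ∈ s j, (d j * (θ i) ^ 2 / (2 * u' j) + u' j * (y i) ^ 2 / (2 * d j)) :=
            Finset.sum_le_sum hterm
          _ = bR j / u' j / 2 + u' j * aR j := by
                have e1 : bR j / u' j / 2 = ∑ i ∈ s j, d j * (θ i) ^ 2 / (2 * u' j) := by
                  show d j * (∑ i ∈ s j, (θ i) ^ 2) / u' j / 2 = _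
                  rw [div_div, Finset.mul_sum, Finset.sum_div]
                  exact Finset.sum_congr rfl fun i _ => by ring
                have e2 : u' j * aR j = ∑ i ∈ s j, u' j * (y i) ^ 2 / (2 * d j) := by
                  show u' j * ((∑ i ∈ s j, (y i) ^ 2) / (2 * d j)) = _
                  rw [mul_div_assoc', Finset.mul_sum, Finset.sum_div]
                rw [e1, e2, ← Finset.sum_add_distrib]
      calc ((∑ i, θ i * y i : ℝ) : EReal) - fconj (gsk s d k) y
          ≤ ((∑ i, θ i * y i : ℝ) : EReal) - ((∑ j ∈ T, aR j : ℝ) : EReal) :=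
            EReal.sub_le_sub le_rfl hfc
        _ = ((∑ i, θ i * y i - ∑ j ∈ T, aR j : ℝ) : EReal) := (EReal.coe_sub _ _).symm
        _ ≤ (((∑ j, if u' j = 0 then 0 else bR j / u' j) / 2 : ℝ) : EReal) := by
            rw [EReal.coe_le_coe_iff]
            linarith [hreal, hTle]
  -- the optimal u
  obtain ⟨lam, u, hlam0, hu01, husum, hC2, hC3, hC5, hC6⟩ := exists_waterfill hk1 hkm bR hbR
  have huBk : u ∈ Bk m k := ⟨hu01, husum⟩
  have hzero : ∀ j, u j = 0 → groupProj (s j) θ = 0 := by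
    intro j hj
    apply groupProj_eq_zero_iff.2
    intro i hi
    have hb0 : bR j = 0 := hC2 j hj
    have hsum0 : ∑ i' ∈ s j, (θ i') ^ 2 = 0 := by
      have hb0' : d j * ∑ i' ∈ s j, (θ i') ^ 2 = 0 := hb0
      rcases mul_eq_zero.1 hb0' with h | h
      · exact absurd h (ne_of_gt (hd j))
      · exact h
    have hsq := (Finset.sum_eq_zero_iff_of_nonneg (fun i' _ => sq_nonneg (θ i'))).1 hsum0 i hi
    exact pow_eq_zero_iff two_ne_zero |>.1 hsq
  -- the maximizing dual point
  set ystar : Fin n → ℝ := fun i => ∑ j, if i ∈ s j ∧ u j ≠ 0 then d j * θ i / u j else 0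
    with hystardef
  have hyval : ∀ j, ∀ i ∈ s j, ystar i = if u j = 0 then 0 else d j * θ i / u j := by
    intro j i hi
    rw [hystardef]
    simp only
    rw [Finset.sum_eq_single j]
    · by_cases hz : u j = 0
      · rw [if_pos hz, if_neg (by simp [hz])]
      · rw [if_neg hz, if_pos ⟨hi, hz⟩]
    · intro j' _ hne
      have : i ∉ s j' := fun h => hne (mem_group_unique hdisj h hi)
      simp [this]
    · intro h
      exact absurd (Finset.mem_univ j) h
  have hinner : ∑ i, θ i * ystar i = ∑ j, if u j = 0 then 0 else bR j / u j := by
    rw [sum_partition s hdisj hcover]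
    refine Finset.sum_congr rfl fun j _ => ?_
    by_cases hz : u j = 0
    · rw [if_pos hz]
      refine Finset.sum_eq_zero fun i hi => ?_
      rw [hyval j i hi, if_pos hz, mul_zero]
    · rw [if_neg hz]
      have hpos : 0 < u j := lt_of_le_of_ne (hu01 j).1 (Ne.symm hz)
      rw [Finset.sum_congr rfl (fun i hi => by rw [hyval j i hi, if_neg hz])]
      show _ = d j * (∑ i ∈ s j, (θ i) ^ 2) / u j
      rw [Finset.mul_sum, Finset.sum_div]
      refine Finset.sum_congr rfl fun i _ => ?_
      field_simp [hz]
  have haRstar : ∀ j, (∑ i ∈ s j, (ystar i) ^ 2) / (2 * d j)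
      = if u j = 0 then 0 else bR j / (2 * (u j) ^ 2) := by
    intro j
    by_cases hz : u j = 0
    · rw [if_pos hz]
      have h0 : ∑ i ∈ s j, (ystar i) ^ 2 = 0 :=
        Finset.sum_eq_zero fun i hi => by rw [hyval j i hi, if_pos hz]; ring
      rw [h0, zero_div]
    · rw [if_neg hz]
      have hpos : 0 < u j := lt_of_le_of_ne (hu01 j).1 (Ne.symm hz)
      have h1 : ∑ i ∈ s j, (ystar i) ^ 2 = d j ^ 2 * (∑ i ∈ s j, (θ i) ^ 2) / (u j) ^ 2 := by
        rw [Finset.sum_congr rfl (fun i hi => by rw [hyval j i hi, if_neg hz])]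
        rw [Finset.mul_sum, Finset.sum_div]
        exact Finset.sum_congr rfl fun i _ => by rw [div_pow, mul_pow]
      rw [h1]
      show _ = d j * (∑ i ∈ s j, (θ i) ^ 2) / (2 * (u j) ^ 2)
      rw [div_div, div_eq_div_iff (ne_of_gt (mul_pos (pow_pos hpos 2) (by linarith [hd j])))
        (ne_of_gt (mul_pos (by norm_num : (0:ℝ) < 2) (pow_pos hpos 2)))]
      ring
  have hconj_le : fconj (gsk s d k) ystar
      ≤ (((∑ j, if u j = 0 then 0 else bR j / u j) / 2 : ℝ) : EReal) := by
    apply fconj_gsk_le s hdisj hcover d hd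
    intro S hS
    have hjbound : ∀ j, (∑ i ∈ s j, (ystar i) ^ 2) / (2 * d j)
        ≤ lam ^ 2 / 2 + (if u j = 1 then (bR j - lam ^ 2) / 2 else 0) := by
      intro j
      rw [haRstar j]
      by_cases hz : u j = 0
      · rw [if_pos hz, if_neg (by rw [hz]; norm_num)]
        positivity
      · rw [if_neg hz]
        have hpos : 0 < u j := lt_of_le_of_ne (hu01 j).1 (Ne.symm hz)
        rcases eq_or_lt_of_le (hu01 j).2 with h1 | h1
        · rw [if_pos h1, h1]
          ring_nf
          linarith
        · rw [if_neg (ne_of_lt h1)]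
          have hb3 := hC3 j hpos h1
          rw [hb3, add_zero]
          rw [div_le_div_iff₀ (by positivity) (by norm_num)]
          ring_nf
          nlinarith [sq_nonneg (u j), sq_nonneg lam]
    have hite_nonneg : ∀ j, (0:ℝ) ≤ (if u j = 1 then (bR j - lam ^ 2) / 2 else 0) := by
      intro j
      split_ifs with h
      · linarith [hC5 j h]
      · exact le_rfl
    have hrlow : ∀ j, lam ^ 2 * u j + (if u j = 1 then bR j - lam ^ 2 else 0)
        ≤ (if u j = 0 then 0 else bR j / u j) := by
      intro j
      by_cases hz : u j = 0
      · rw [if_pos hz, hz, if_neg (by norm_num), mul_zero, add_zero]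
      · rw [if_neg hz]
        have hpos : 0 < u j := lt_of_le_of_ne (hu01 j).1 (Ne.symm hz)
        rcases eq_or_lt_of_le (hu01 j).2 with h1 | h1
        · rw [if_pos h1, h1, div_one]
          ring_nf
          linarith
        · rw [if_neg (ne_of_lt h1), add_zero]
          have hb3 := hC3 j hpos h1
          rw [hb3]
          rw [le_div_iff₀ hpos]
          ring_nf
          linarith
    have hsum1 : lam ^ 2 * (∑ j, u j) + ∑ j, (if u j = 1 then bR j - lam ^ 2 else 0)
        ≤ ∑ j, (if u j = 0 then 0 else bR j / u j) := by
      rw [Finset.mul_sum, ← Finset.sum_add_distrib]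
      exact Finset.sum_le_sum fun j _ => hrlow j
    have hklam : (k : ℝ) * lam ^ 2 ≤ lam ^ 2 * ∑ j, u j := by
      rcases hC6 with h | h
      · rw [h]; ring_nf; exact le_rfl
      · rw [h]; ring_nf; exact le_rfl
    calc ∑ j ∈ S, (∑ i ∈ s j, (ystar i) ^ 2) / (2 * d j)
        ≤ ∑ j ∈ S, (lam ^ 2 / 2 + (if u j = 1 then (bR j - lam ^ 2) / 2 else 0)) :=
          Finset.sum_le_sum fun j _ => hjbound j
      _ = S.card * (lam ^ 2 / 2) + ∑ j ∈ S, (if u j = 1 then (bR j - lam ^ 2) / 2 else 0) := by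
          rw [Finset.sum_add_distrib, Finset.sum_const, nsmul_eq_mul]
      _ ≤ (k : ℝ) * (lam ^ 2 / 2) + ∑ j, (if u j = 1 then (bR j - lam ^ 2) / 2 else 0) := by
          refine add_le_add (mul_le_mul_of_nonneg_right ?_ (by positivity)) ?_
          · exact_mod_cast hS
          · exact Finset.sum_le_sum_of_subset_of_nonneg (Finset.subset_univ S)
              (fun j _ _ => hite_nonneg j)
      _ ≤ (∑ j, if u j = 0 then 0 else bR j / u j) / 2 := by
          have e1 : ∑ j, (if u j = 1 then (bR j - lam ^ 2) / 2 else 0)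
              = (∑ j, (if u j = 1 then bR j - lam ^ 2 else 0)) / 2 := by
            rw [Finset.sum_div]
            refine Finset.sum_congr rfl fun j _ => ?_
            split_ifs <;> simp
          rw [e1]
          linarith [hsum1, hklam]
  have hge : (((∑ j, if u j = 0 then 0 else bR j / u j) / 2 : ℝ) : EReal)
      ≤ fconj (fconj (gsk s d k)) θ := by
    have hle1 := le_iSup
      (fun y => ((∑ i, θ i * y i : ℝ) : EReal) - fconj (gsk s d k) y) ystar
    refine le_trans ?_ hle1
    show _ ≤ ((∑ i, θ i * ystar i : ℝ) : EReal) - fconj (gsk s d k) ystar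
    rw [hinner]
    calc (((∑ j, if u j = 0 then 0 else bR j / u j) / 2 : ℝ) : EReal)
        = ((∑ j, if u j = 0 then 0 else bR j / u j : ℝ) : EReal)
          - (((∑ j, if u j = 0 then 0 else bR j / u j) / 2 : ℝ) : EReal) := by
          rw [← EReal.coe_sub, EReal.coe_eq_coe_iff]
          ring
      _ ≤ ((∑ j, if u j = 0 then 0 else bR j / u j : ℝ) : EReal) - fconj (gsk s d k) ystar :=
          EReal.sub_le_sub le_rfl hconj_le
  have hub := hlb u huBk
  rw [hFval u (fun j => (hu01 j).1) hzero] at hub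
  have heq : fconj (fconj (gsk s d k)) θ
      = (((∑ j, if u j = 0 then 0 else bR j / u j) / 2 : ℝ) : EReal) := le_antisymm hub hge
  constructor
  · exact ⟨u, huBk, by rw [heq, hFval u (fun j => (hu01 j).1) hzero]⟩
  · rintro x ⟨u', hu', rfl⟩
    exact hlb u' hu'
end
end

section
/- The weighted group sparse envelope reduces to the scalar sparse envelope of the weighted group norms: GS_k(θ) = S_k((√d_1·‖θ_{s_1}‖₂, …, √d_m·‖θ_{s_m}‖₂)ᵀ), where S_k = s_k** is the biconjugate of s_k(x) = (1/2)‖x‖₂² + δ_{{x : ‖x‖₀ ≤ k}}(x) on ℝ^m. -/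
open Finset

noncomputable section
open scoped Classical BigOperators

namespace GskAux

def gnorm {n : ℕ} (s : Finset (Fin n)) (y : Fin n → ℝ) : ℝ :=
  Real.sqrt (∑ i ∈ s, (y i) ^ 2)

lemma gnorm_nonneg {n : ℕ} (s : Finset (Fin n)) (y : Fin n → ℝ) : 0 ≤ gnorm s y :=
  Real.sqrt_nonneg _

lemma sqsum_nonneg {n : ℕ} (s : Finset (Fin n)) (y : Fin n → ℝ) :
    0 ≤ ∑ i ∈ s, (y i) ^ 2 :=
  Finset.sum_nonneg fun _ _ => sq_nonneg _

lemma gnorm_sq {n : ℕ} (s : Finset (Fin n)) (y : Fin n → ℝ) :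
    gnorm s y ^ 2 = ∑ i ∈ s, (y i) ^ 2 :=
  Real.sq_sqrt (sqsum_nonneg s y)

lemma gnorm_eq_zero_iff {n : ℕ} (s : Finset (Fin n)) (y : Fin n → ℝ) :
    gnorm s y = 0 ↔ ∀ i ∈ s, y i = 0 := by
  rw [gnorm, Real.sqrt_eq_zero (sqsum_nonneg s y)]
  rw [Finset.sum_eq_zero_iff_of_nonneg (fun i _ => sq_nonneg (y i))]
  simp [pow_eq_zero_iff]

lemma gnorm_eq_zero_iff' {n : ℕ} (s : Finset (Fin n)) (y : Fin n → ℝ) :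
    gnorm s y = 0 ↔ groupProj s y = 0 := by
  rw [gnorm_eq_zero_iff]
  constructor
  · intro h; funext i; simp only [groupProj]
    split_ifs with hi
    · exact h i hi
    · rfl
  · intro h i hi
    have := congrFun h i
    simpa [groupProj, hi] using this

lemma sum_split {n m : ℕ} (s : Fin m → Finset (Fin n))
    (hdisj : ∀ j j', j ≠ j' → Disjoint (s j) (s j'))
    (hcover : ∀ i, ∃ j, i ∈ s j) (f : Fin n → ℝ) :
    ∑ i, f i = ∑ j, ∑ i ∈ s j, f i := by
  rw [← Finset.sum_biUnion (fun j _ j' _ h => hdisj j j' h)]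
  congr 1
  symm
  apply Finset.eq_univ_iff_forall.mpr
  intro i
  obtain ⟨j, hj⟩ := hcover i
  exact Finset.mem_biUnion.mpr ⟨j, Finset.mem_univ j, hj⟩


/-- Scale a vector groupwise so that its group norms become prescribed values. -/
lemma scaled_props {n m : ℕ} (s : Fin m → Finset (Fin n))
    (hdisj : ∀ j j', j ≠ j' → Disjoint (s j) (s j'))
    (hcover : ∀ i, ∃ j, i ∈ s j)
    (a : Fin m → ℝ) (ha : ∀ j, 0 ≤ a j) (v : Fin n → ℝ) :
    ∃ u : Fin n → ℝ,
      (∀ j, gnorm (s j) u = if gnorm (s j) v = 0 then 0 else a j) ∧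
      (∀ j, ∑ i ∈ s j, v i * u i = a j * gnorm (s j) v) := by
  set g : Fin n → Fin m := fun i => (hcover i).choose with hg
  have hgmem : ∀ i, i ∈ s (g i) := fun i => (hcover i).choose_spec
  have hgeq : ∀ {i : Fin n} {j : Fin m}, i ∈ s j → g i = j := by
    intro i j hij
    by_contra hne
    exact (Finset.disjoint_left.mp (hdisj _ _ hne) (hgmem i)) hij
  set c : Fin m → ℝ := fun j => a j / gnorm (s j) v with hc
  have hc0 : ∀ j, 0 ≤ c j := fun j => div_nonneg (ha j) (gnorm_nonneg _ _)
  refine ⟨fun i => c (g i) * v i, ?_, ?_⟩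
  · intro j
    have hsum : ∑ i ∈ s j, (c (g i) * v i) ^ 2 = c j ^ 2 * ∑ i ∈ s j, (v i) ^ 2 := by
      rw [Finset.mul_sum]
      exact Finset.sum_congr rfl fun i hi => by rw [hgeq hi]; ring
    have : gnorm (s j) (fun i => c (g i) * v i) = c j * gnorm (s j) v := by
      rw [gnorm, hsum, Real.sqrt_mul (sq_nonneg _), Real.sqrt_sq (hc0 j), gnorm]
    rw [this]
    by_cases hz : gnorm (s j) v = 0
    · simp [hz]
    · rw [if_neg hz, hc]
      field_simp
  · intro j
    have hsum : ∑ i ∈ s j, v i * (c (g i) * v i) = c j * ∑ i ∈ s j, (v i) ^ 2 := by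
      rw [Finset.mul_sum]
      exact Finset.sum_congr rfl fun i hi => by rw [hgeq hi]; ring
    rw [hsum, ← gnorm_sq]
    by_cases hz : gnorm (s j) v = 0
    · simp [hz]
    · rw [hc]
      field_simp

lemma gsk_eq_sparse {n m : ℕ} (s : Fin m → Finset (Fin n)) (d : Fin m → ℝ)
    (hd : ∀ j, 0 < d j) (k : ℕ) (θ : Fin n → ℝ) :
    gsk s d k θ = sparseFun k (fun j => Real.sqrt (d j) * gnorm (s j) θ) := by
  have hsd : ∀ j, Real.sqrt (d j) ≠ 0 := fun j => ne_of_gt (Real.sqrt_pos.mpr (hd j))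
  have hnz : ∀ j, (Real.sqrt (d j) * gnorm (s j) θ ≠ 0) ↔ groupProj (s j) θ ≠ 0 := by
    intro j
    rw [mul_ne_zero_iff]
    constructor
    · intro h
      exact fun hz => h.2 ((gnorm_eq_zero_iff' _ _).mpr hz)
    · intro h
      exact ⟨hsd j, fun hz => h ((gnorm_eq_zero_iff' _ _).mp hz)⟩
  have hcard : nnzGroups s θ = l0norm (fun j => Real.sqrt (d j) * gnorm (s j) θ) := by
    unfold nnzGroups l0norm
    congr 1
    ext j
    simp only [Finset.mem_filter, Finset.mem_univ, true_and]
    exact (hnz j).symm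
  have hsq : ∀ j, (Real.sqrt (d j) * gnorm (s j) θ) ^ 2 = d j * ∑ i ∈ s j, (θ i) ^ 2 := by
    intro j
    rw [mul_pow, Real.sq_sqrt (le_of_lt (hd j)), gnorm_sq]
  unfold gsk sparseFun
  rw [← hcard]
  split_ifs with h
  · congr 1
    exact congrArg _ (Finset.sum_congr rfl fun j _ => (hsq j).symm)
  · rfl

lemma sparseFun_mono {m k : ℕ} {v w : Fin m → ℝ} (h : ∀ j, |v j| ≤ |w j|) :
    sparseFun k v ≤ sparseFun k w := by
  have hl0 : l0norm v ≤ l0norm w := by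
    apply Finset.card_le_card
    intro j hj
    simp only [Finset.mem_filter, Finset.mem_univ, true_and] at *
    intro h0
    apply hj
    have := h j
    rw [h0, abs_zero] at this
    exact abs_eq_zero.mp (le_antisymm this (abs_nonneg _))
  unfold sparseFun
  by_cases hw : l0norm w ≤ k
  · rw [if_pos hw, if_pos (hl0.trans hw)]
    apply EReal.coe_le_coe_iff.mpr
    have : ∑ j, (v j) ^ 2 ≤ ∑ j, (w j) ^ 2 := by
      apply Finset.sum_le_sum
      intro j _
      rw [← sq_abs (v j), ← sq_abs (w j)]
      exact pow_le_pow_left₀ (abs_nonneg _) (h j) 2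
    linarith
  · rw [if_neg hw]; exact le_top

lemma fconj_sparse_mono {m k : ℕ} {v w : Fin m → ℝ} (h : ∀ j, |v j| ≤ |w j|) :
    fconj (sparseFun k) v ≤ fconj (sparseFun k) w := by
  refine iSup_le fun x => ?_
  set x' : Fin m → ℝ := fun j => if w j < 0 then -|x j| else |x j| with hx'
  refine le_iSup_of_le x' ?_
  have habs : ∀ j, |x' j| = |x j| := by
    intro j
    by_cases hj : w j < 0 <;> simp [hx', hj, abs_abs]
  have hfx : sparseFun k x' = sparseFun k x := by
    have hsq : ∀ j, (x' j) ^ 2 = (x j) ^ 2 := fun j => by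
      rw [← sq_abs (x' j), habs j, sq_abs]
    have hl0 : l0norm x' = l0norm x := by
      unfold l0norm
      congr 1
      ext j
      simp only [Finset.mem_filter, Finset.mem_univ, true_and]
      rw [← abs_ne_zero, habs j, abs_ne_zero]
    unfold sparseFun
    rw [hl0]
    split_ifs with hc
    · norm_cast
      rw [Finset.sum_congr rfl fun j _ => hsq j]
    · rfl
  refine EReal.sub_le_sub (EReal.coe_le_coe_iff.mpr ?_) (le_of_eq hfx)
  apply Finset.sum_le_sum
  intro j _
  have hwx' : w j * x' j = |w j| * |x j| := by
    by_cases hj : w j < 0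
    · simp only [hx', if_pos hj]
      rw [abs_of_neg hj]; ring
    · simp only [hx', if_neg hj]
      rw [abs_of_nonneg (not_lt.mp hj)]
  calc v j * x j ≤ |v j * x j| := le_abs_self _
    _ = |v j| * |x j| := abs_mul _ _
    _ ≤ |w j| * |x j| := mul_le_mul_of_nonneg_right (h j) (abs_nonneg _)
    _ = w j * x' j := hwx'.symm

lemma step1 {n m : ℕ} (k : ℕ) (s : Fin m → Finset (Fin n))
    (hdisj : ∀ j j', j ≠ j' → Disjoint (s j) (s j'))
    (hcover : ∀ i, ∃ j, i ∈ s j)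
    (d : Fin m → ℝ) (hd : ∀ j, 0 < d j) (y : Fin n → ℝ) :
    fconj (gsk s d k) y
      = fconj (sparseFun k) (fun j => gnorm (s j) y / Real.sqrt (d j)) := by
  have hsd : ∀ j, (0:ℝ) < Real.sqrt (d j) := fun j => Real.sqrt_pos.mpr (hd j)
  apply le_antisymm
  · refine iSup_le fun θ => ?_
    refine le_iSup_of_le (fun j => Real.sqrt (d j) * gnorm (s j) θ) ?_
    rw [gsk_eq_sparse s d hd k θ]
    refine EReal.sub_le_sub (EReal.coe_le_coe_iff.mpr ?_) le_rfl
    rw [sum_split s hdisj hcover]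
    apply Finset.sum_le_sum
    intro j _
    calc ∑ i ∈ s j, y i * θ i
        ≤ gnorm (s j) y * gnorm (s j) θ := Real.sum_mul_le_sqrt_mul_sqrt _ _ _
      _ = gnorm (s j) y / Real.sqrt (d j) * (Real.sqrt (d j) * gnorm (s j) θ) := by
          have h0 : Real.sqrt (d j) ≠ 0 := (hsd j).ne'
          field_simp
  · refine iSup_le fun w => ?_
    obtain ⟨u, hu1, hu2⟩ := scaled_props s hdisj hcover (fun j => |w j| / Real.sqrt (d j))
      (fun j => div_nonneg (abs_nonneg _) (Real.sqrt_nonneg _)) y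
    refine le_iSup_of_le u ?_
    have hub : gsk s d k u ≤ sparseFun k w := by
      rw [gsk_eq_sparse s d hd k u]
      apply sparseFun_mono
      intro j
      rw [hu1 j]
      by_cases hzj : gnorm (s j) y = 0
      · simp [hzj, abs_nonneg]
      · rw [if_neg hzj]
        have h0 : Real.sqrt (d j) ≠ 0 := (hsd j).ne'
        have : Real.sqrt (d j) * (|w j| / Real.sqrt (d j)) = |w j| := by field_simp
        rw [this, abs_abs]
    refine EReal.sub_le_sub (EReal.coe_le_coe_iff.mpr ?_) hub
    rw [show (∑ i, y i * u i) = ∑ j, ∑ i ∈ s j, y i * u i from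
      sum_split s hdisj hcover fun i => y i * u i]
    apply Finset.sum_le_sum
    intro j _
    rw [hu2 j]
    calc gnorm (s j) y / Real.sqrt (d j) * w j
        ≤ gnorm (s j) y / Real.sqrt (d j) * |w j| :=
          mul_le_mul_of_nonneg_left (le_abs_self _)
            (div_nonneg (gnorm_nonneg _ _) (Real.sqrt_nonneg _))
      _ = |w j| / Real.sqrt (d j) * gnorm (s j) y := by ring
end GskAux

/-- the weighted group sparse envelope reduces to the scalar
sparse envelope applied to the vector of weighted group norms. -/
theorem gsk_biconj_eq_sef {n m : ℕ} (k : ℕ) (hk1 : 1 ≤ k) (hkm : k ≤ m)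
    (s : Fin m → Finset (Fin n))
    (hdisj : ∀ j j', j ≠ j' → Disjoint (s j) (s j'))
    (hcover : ∀ i, ∃ j, i ∈ s j)
    (d : Fin m → ℝ) (hd : ∀ j, 0 < d j)
    (θ : Fin n → ℝ) :
    fconj (fconj (gsk s d k)) θ
      = fconj (fconj (sparseFun k))
          (fun j => Real.sqrt (d j) * Real.sqrt (∑ i ∈ s j, (θ i) ^ 2)) := by
  have hsd : ∀ j, (0:ℝ) < Real.sqrt (d j) := fun j => Real.sqrt_pos.mpr (hd j)
  have hL : fconj (fconj (gsk s d k)) θ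
      = ⨆ y : Fin n → ℝ, ((∑ i, θ i * y i : ℝ) : EReal)
          - fconj (sparseFun k) (fun j => GskAux.gnorm (s j) y / Real.sqrt (d j)) := by
    refine iSup_congr fun y => ?_
    rw [GskAux.step1 k s hdisj hcover d hd y]
  rw [hL]
  apply le_antisymm
  · refine iSup_le fun y => ?_
    refine le_iSup_of_le (fun j => GskAux.gnorm (s j) y / Real.sqrt (d j)) ?_
    refine EReal.sub_le_sub (EReal.coe_le_coe_iff.mpr ?_) le_rfl
    rw [GskAux.sum_split s hdisj hcover (fun i => θ i * y i)]
    apply Finset.sum_le_sum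
    intro j _
    calc ∑ i ∈ s j, θ i * y i
        ≤ GskAux.gnorm (s j) θ * GskAux.gnorm (s j) y :=
          Real.sum_mul_le_sqrt_mul_sqrt _ _ _
      _ = Real.sqrt (d j) * Real.sqrt (∑ i ∈ s j, (θ i) ^ 2)
            * (GskAux.gnorm (s j) y / Real.sqrt (d j)) := by
          have h0 : Real.sqrt (d j) ≠ 0 := (hsd j).ne'
          rw [show Real.sqrt (∑ i ∈ s j, (θ i) ^ 2) = GskAux.gnorm (s j) θ from rfl]
          field_simp
  · refine iSup_le fun w => ?_
    obtain ⟨u, hu1, hu2⟩ := GskAux.scaled_props s hdisj hcover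
      (fun j => Real.sqrt (d j) * |w j|)
      (fun j => mul_nonneg (Real.sqrt_nonneg _) (abs_nonneg _)) θ
    refine le_iSup_of_le u ?_
    have hFle : fconj (sparseFun k) (fun j => GskAux.gnorm (s j) u / Real.sqrt (d j))
        ≤ fconj (sparseFun k) w := by
      apply GskAux.fconj_sparse_mono
      intro j
      rw [hu1 j]
      by_cases hzj : GskAux.gnorm (s j) θ = 0
      · simp [hzj, abs_nonneg]
      · rw [if_neg hzj]
        have h0 : Real.sqrt (d j) ≠ 0 := (hsd j).ne'
        have : Real.sqrt (d j) * |w j| / Real.sqrt (d j) = |w j| := by field_simp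
        rw [this, abs_abs]
    refine EReal.sub_le_sub (EReal.coe_le_coe_iff.mpr ?_) hFle
    rw [show (∑ i, θ i * u i) = ∑ j, ∑ i ∈ s j, θ i * u i from
      GskAux.sum_split s hdisj hcover fun i => θ i * u i]
    apply Finset.sum_le_sum
    intro j _
    rw [hu2 j]
    calc Real.sqrt (d j) * Real.sqrt (∑ i ∈ s j, (θ i) ^ 2) * w j
        ≤ Real.sqrt (d j) * Real.sqrt (∑ i ∈ s j, (θ i) ^ 2) * |w j| :=
          mul_le_mul_of_nonneg_left (le_abs_self _)
            (mul_nonneg (Real.sqrt_nonneg _) (Real.sqrt_nonneg _))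
      _ = Real.sqrt (d j) * |w j| * GskAux.gnorm (s j) θ := by
          rw [show Real.sqrt (∑ i ∈ s j, (θ i) ^ 2) = GskAux.gnorm (s j) θ from rfl]
          ring
end
end

section
/- In the singleton-groups case with unit weights (m = n, d_j = 1), the sparse envelope satisfies S_k(θ) = (1/2)‖θ‖₂² whenever ‖θ‖₀ ≤ k, and S_k(θ) < (1/2)‖θ‖₂² + δ_{‖θ‖₀≤k}(θ) = +∞ for any θ with ‖θ‖₀ > k; in particular S_k is finite everywhere on ℝⁿ. -/
open Finset

noncomputable section
open scoped Classical BigOperators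

/-- helper: `c - (c - a) ≤ a` in `EReal` for real `c`. -/
lemma coe_sub_sub_le_aux (c : ℝ) (a : EReal) : (c:EReal) - ((c:EReal) - a) ≤ a := by
  induction a using EReal.rec with
  | bot => simp [sub_eq_add_neg]
  | coe r => rw [← EReal.coe_sub, ← EReal.coe_sub]; exact le_of_eq (by norm_num)
  | top => simp [sub_eq_add_neg]

/-- The biconjugate is below the function. -/
lemma biconj_le {n : ℕ} (f : (Fin n → ℝ) → EReal) (θ : Fin n → ℝ) :
    fconj (fconj f) θ ≤ f θ := by
  apply iSup_le
  intro y
  have h1 : ((∑ i, y i * θ i : ℝ) : EReal) - f θ ≤ fconj f y :=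
    le_iSup (fun x => ((∑ i, y i * x i : ℝ) : EReal) - f x) θ
  have hcomm : (∑ i, θ i * y i : ℝ) = ∑ i, y i * θ i :=
    Finset.sum_congr rfl fun i _ => mul_comm _ _
  show ((∑ i, θ i * y i : ℝ) : EReal) - fconj f y ≤ f θ
  rw [hcomm]
  calc ((∑ i, y i * θ i : ℝ) : EReal) - fconj f y
      ≤ ((∑ i, y i * θ i : ℝ) : EReal) - (((∑ i, y i * θ i : ℝ) : EReal) - f θ) :=
        EReal.sub_le_sub le_rfl h1
    _ ≤ f θ := coe_sub_sub_le_aux _ _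

/-- The conjugate of `sparseFun k` is bounded by half the squared norm. -/
lemma fstar_le {n : ℕ} (k : ℕ) (y : Fin n → ℝ) :
    fconj (sparseFun k) y ≤ ((((1:ℝ)/2) * ∑ i, (y i)^2 : ℝ) : EReal) := by
  apply iSup_le
  intro x
  unfold sparseFun
  split
  · rw [← EReal.coe_sub, EReal.coe_le_coe_iff]
    have hpt : ∀ i ∈ (univ : Finset (Fin n)),
        y i * x i - (1:ℝ)/2 * (x i)^2 ≤ (1:ℝ)/2 * (y i)^2 := by
      intro i _
      nlinarith [sq_nonneg (y i - x i)]
    have hs := Finset.sum_le_sum hpt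
    rw [Finset.sum_sub_distrib, ← Finset.mul_sum, ← Finset.mul_sum] at hs
    linarith
  · rw [EReal.sub_top]; exact bot_le

/-- the sparse envelope `S_k = s_k**` agrees with `½‖θ‖₂²` on
`k`-sparse vectors, is strictly below `s_k(θ) = +∞` on non-`k`-sparse vectors,
and is finite (real-valued) everywhere. -/
theorem sef_finite {n : ℕ} (k : ℕ) (hk1 : 1 ≤ k) (hk : k ≤ n) :
    (∀ θ : Fin n → ℝ, l0norm θ ≤ k →
        fconj (fconj (sparseFun k)) θ = ((((1 : ℝ) / 2) * ∑ i, (θ i) ^ 2 : ℝ) : EReal))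
    ∧ (∀ θ : Fin n → ℝ, k < l0norm θ →
        fconj (fconj (sparseFun k)) θ < sparseFun k θ)
    ∧ (∀ θ : Fin n → ℝ, ∃ r : ℝ, fconj (fconj (sparseFun k)) θ = ((r : ℝ) : EReal)) := by
  have hn : 0 < n := lt_of_lt_of_le hk1 hk
  haveI : Nonempty (Fin n) := Fin.pos_iff_nonempty.mp hn
  -- finiteness
  have h3 : ∀ θ : Fin n → ℝ, ∃ r : ℝ, fconj (fconj (sparseFun k)) θ = ((r : ℝ) : EReal) := by
    intro θ
    set T : ℝ := ∑ i, |θ i| with hT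
    -- lower bound by 0
    have hf0 : fconj (sparseFun k) (0 : Fin n → ℝ) ≤ (0 : EReal) := by
      have := fstar_le (n := n) k (0 : Fin n → ℝ)
      simpa using this
    have hlow0 : ((∑ i, θ i * (0:Fin n → ℝ) i : ℝ) : EReal) - fconj (sparseFun k) (0 : Fin n → ℝ)
        ≤ fconj (fconj (sparseFun k)) θ :=
      le_iSup (fun y => ((∑ i, θ i * y i : ℝ) : EReal) - fconj (sparseFun k) y) (0 : Fin n → ℝ)
    have hlow : (0 : EReal) ≤ fconj (fconj (sparseFun k)) θ := by
      refine le_trans ?_ hlow0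
      have : ((0:ℝ) : EReal) - (0:EReal) ≤ ((∑ i, θ i * (0:Fin n → ℝ) i : ℝ) : EReal) - fconj (sparseFun k) (0 : Fin n → ℝ) := by
        have hsum : (∑ i, θ i * (0:Fin n → ℝ) i : ℝ) = 0 := by simp
        rw [hsum]
        exact EReal.sub_le_sub le_rfl hf0
      simpa using this
    -- upper bound
    have hup : fconj (fconj (sparseFun k)) θ ≤ ((((1:ℝ)/2) * T^2 : ℝ) : EReal) := by
      apply iSup_le
      intro y
      show ((∑ i, θ i * y i : ℝ) : EReal) - fconj (sparseFun k) y ≤ _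
      rw [show (∑ i, θ i * y i : ℝ) = ∑ i, y i * θ i from
        Finset.sum_congr rfl fun i _ => mul_comm _ _]
      obtain ⟨i0, -, hi0⟩ := Finset.exists_max_image (univ : Finset (Fin n)) (fun i => |y i|)
        univ_nonempty
      set x : Fin n → ℝ := fun j => if j = i0 then y i0 else 0 with hx
      have hl0 : l0norm x ≤ k := by
        have hsub : (univ.filter fun j => x j ≠ 0) ⊆ {i0} := by
          intro j hj
          simp only [mem_filter] at hj
          simp only [mem_singleton]
          by_contra h
          exact hj.2 (if_neg h)
        calc l0norm x ≤ ({i0} : Finset (Fin n)).card := Finset.card_le_card hsub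
          _ = 1 := Finset.card_singleton _
          _ ≤ k := hk1
      have hsum1 : (∑ i, y i * x i : ℝ) = y i0 * y i0 := by
        simp [hx, mul_ite, Finset.sum_ite_eq']
      have hsum2 : (∑ i, (x i)^2 : ℝ) = (y i0)^2 := by
        have : ∀ i, (x i)^2 = if i = i0 then (y i0)^2 else 0 := by
          intro i; by_cases h : i = i0 <;> simp [hx, h]
        simp [this, Finset.sum_ite_eq']
      have hfx : sparseFun k x = ((((1:ℝ)/2) * (y i0)^2 : ℝ) : EReal) := by
        unfold sparseFun
        rw [if_pos hl0, hsum2]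
      have h1 : ((y i0 * y i0 - (1:ℝ)/2 * (y i0)^2 : ℝ) : EReal) ≤ fconj (sparseFun k) y := by
        have := le_iSup (fun x => ((∑ i, y i * x i : ℝ) : EReal) - sparseFun k x) x
        rw [hsum1, hfx, ← EReal.coe_sub] at this
        exact this
      have h2 : ((∑ i, y i * θ i : ℝ) : EReal) - fconj (sparseFun k) y
          ≤ ((∑ i, y i * θ i : ℝ) : EReal) - ((y i0 * y i0 - (1:ℝ)/2 * (y i0)^2 : ℝ) : EReal) :=
        EReal.sub_le_sub le_rfl h1
      refine le_trans h2 ?_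
      rw [← EReal.coe_sub, EReal.coe_le_coe_iff]
      have hA : (∑ i, y i * θ i : ℝ) ≤ |y i0| * T := by
        rw [hT, Finset.mul_sum]
        apply Finset.sum_le_sum
        intro i _
        calc y i * θ i ≤ |y i * θ i| := le_abs_self _
          _ = |y i| * |θ i| := abs_mul _ _
          _ ≤ |y i0| * |θ i| := mul_le_mul_of_nonneg_right (hi0 i (mem_univ i)) (abs_nonneg _)
      nlinarith [sq_nonneg (T - |y i0|), sq_abs (y i0), sq_nonneg (y i0)]
    refine ⟨(fconj (fconj (sparseFun k)) θ).toReal, ?_⟩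
    have hnt : fconj (fconj (sparseFun k)) θ ≠ ⊤ :=
      ne_top_of_le_ne_top (EReal.coe_ne_top _) hup
    have hnb : fconj (fconj (sparseFun k)) θ ≠ ⊥ := by
      intro h; rw [h] at hlow; simp at hlow
    exact (EReal.coe_toReal hnt hnb).symm
  refine ⟨?_, ?_, h3⟩
  · intro θ hθ
    refine le_antisymm ?_ ?_
    · refine le_trans (biconj_le _ θ) ?_
      unfold sparseFun
      rw [if_pos hθ]
    · have h1 : fconj (sparseFun k) θ ≤ ((((1:ℝ)/2) * ∑ i, (θ i)^2 : ℝ) : EReal) := fstar_le k θ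
      have h2 : ((∑ i, θ i * θ i : ℝ) : EReal) - fconj (sparseFun k) θ
          ≤ fconj (fconj (sparseFun k)) θ :=
        le_iSup (fun y => ((∑ i, θ i * y i : ℝ) : EReal) - fconj (sparseFun k) y) θ
      refine le_trans ?_ h2
      refine le_trans ?_ (EReal.sub_le_sub le_rfl h1)
      rw [← EReal.coe_sub, EReal.coe_le_coe_iff]
      have : (∑ i, θ i * θ i : ℝ) = ∑ i, (θ i)^2 := by
        apply Finset.sum_congr rfl; intro i _; ring
      rw [this]; linarith
  · intro θ hθ
    obtain ⟨r, hr⟩ := h3 θ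
    rw [hr]
    unfold sparseFun
    rw [if_neg (not_le.mpr hθ)]
    exact EReal.coe_lt_top r
end
end
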